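/- Let ℓ be a prime and m ≥ 0, n ≥ 1 integers. In GSp₄(ℚ_ℓ) one has the double coset decomposition K^{(1)}_{m,n} · diag(ℓ, ℓ, 1, 1) · K^{(1)}_{m,n} = ⋃_{x,y,z=0}^{ℓ−1} A(x,y,z) · K^{(1)}_{m,n} ∪ ⋃_{x,y=0}^{ℓ−1} B(x,y) · K^{(1)}_{m,n}, where A(x,y,z) is the matrix with rows (ℓ,0,x,y), (0,ℓ,z,x), (0,0,1,0), (0,0,0,1) and B(x,y) is the matrix with rows (ℓ,x,0,y), (0,1,0,0), (0,0,ℓ,−x), (0,0,0,1), and the ℓ³ + ℓ² listed left cosets are pairwise distinct. -/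

import Mathlib

open Pointwise

noncomputable section

/-- The standard skew-symmetric matrix `J` defining `GSp₄`. -/
def Jmat (p : ℕ) [Fact p.Prime] : Matrix (Fin 4) (Fin 4) ℚ_[p] :=
  !![0, 0, 0, 1; 0, 0, 1, 0; 0, -1, 0, 0; -1, 0, 0, 0]

/-- The subgroup `K^{(1)}_{m,n}` of `GSp₄(ℤ_ℓ)`: integral symplectic similitudes with
multiplier `μ ≡ 1 (mod ℓ^m)` and entries at positions (2,1), (3,1), (4,1), (4,2), (4,3)
divisible by `ℓⁿ`, viewed inside the 4×4 matrices over `ℚ_ℓ`. -/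
def Kmn1 (p : ℕ) [Fact p.Prime] (m n : ℕ) : Set (Matrix (Fin 4) (Fin 4) ℚ_[p]) :=
  {g | (∀ i j, ‖g i j‖ ≤ 1) ∧ ‖g.det‖ = 1 ∧
    (∃ μ : ℚ_[p], ‖μ‖ = 1 ∧ ‖μ - 1‖ ≤ (p : ℝ) ^ (-(m : ℤ)) ∧
      g.transpose * Jmat p * g = μ • Jmat p) ∧
    ‖g 1 0‖ ≤ (p : ℝ) ^ (-(n : ℤ)) ∧ ‖g 2 0‖ ≤ (p : ℝ) ^ (-(n : ℤ)) ∧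
    ‖g 3 0‖ ≤ (p : ℝ) ^ (-(n : ℤ)) ∧ ‖g 3 1‖ ≤ (p : ℝ) ^ (-(n : ℤ)) ∧
    ‖g 3 2‖ ≤ (p : ℝ) ^ (-(n : ℤ))}

/-- The coset representatives `A(x,y,z)` (for `0 ≤ x,y,z < ℓ`) and `B(x,y)`
(for `0 ≤ x,y < ℓ`). -/
def rep3 (p : ℕ) [Fact p.Prime] :
    (Fin p × Fin p × Fin p) ⊕ (Fin p × Fin p) → Matrix (Fin 4) (Fin 4) ℚ_[p] :=
  Sum.elim
    (fun i => !![(p : ℚ_[p]), 0, ((i.1 : ℕ) : ℚ_[p]), ((i.2.1 : ℕ) : ℚ_[p]);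
                 0, (p : ℚ_[p]), ((i.2.2 : ℕ) : ℚ_[p]), ((i.1 : ℕ) : ℚ_[p]);
                 0, 0, 1, 0;
                 0, 0, 0, 1])
    (fun i => !![(p : ℚ_[p]), ((i.1 : ℕ) : ℚ_[p]), 0, ((i.2 : ℕ) : ℚ_[p]);
                 0, 1, 0, 0;
                 0, 0, (p : ℚ_[p]), -((i.1 : ℕ) : ℚ_[p]);
                 0, 0, 0, 1])

namespace S3

variable {p : ℕ} [Fact p.Prime]

abbrev M4 (p : ℕ) [Fact p.Prime] := Matrix (Fin 4) (Fin 4) ℚ_[p]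

lemma hpp : p.Prime := Fact.out
lemma hpR : (1:ℝ) < p := by exact_mod_cast (hpp : p.Prime).one_lt
lemma ppos : (0:ℝ) < p := lt_trans one_pos hpR
lemma pinv_lt_one : ((p:ℝ))⁻¹ < 1 := by rw [inv_lt_one_iff₀]; right; exact hpR
lemma pinv_pos : (0:ℝ) < (p:ℝ)⁻¹ := inv_pos.mpr ppos
lemma pinv_le_one : ((p:ℝ))⁻¹ ≤ 1 := le_of_lt pinv_lt_one
lemma pQne : ((p:ℚ_[p]) : ℚ_[p]) ≠ 0 := by exact_mod_cast (hpp : p.Prime).ne_zero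
lemma npnorm : ‖((p:ℕ) : ℚ_[p])‖ ≤ 1 := by rw [Padic.norm_p]; exact pinv_le_one

lemma nadd {x y : ℚ_[p]} {c : ℝ} (hx : ‖x‖ ≤ c) (hy : ‖y‖ ≤ c) : ‖x + y‖ ≤ c :=
  le_trans (Padic.nonarchimedean x y) (max_le hx hy)

lemma nneg {x : ℚ_[p]} {c : ℝ} (hx : ‖x‖ ≤ c) : ‖-x‖ ≤ c := by rwa [norm_neg]

lemma nsub {x y : ℚ_[p]} {c : ℝ} (hx : ‖x‖ ≤ c) (hy : ‖y‖ ≤ c) : ‖x - y‖ ≤ c := by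
  rw [sub_eq_add_neg]; exact nadd hx (nneg hy)

lemma nmul {x y : ℚ_[p]} {c : ℝ} (hx : ‖x‖ ≤ 1) (hy : ‖y‖ ≤ c) : ‖x * y‖ ≤ c := by
  rw [norm_mul]
  calc ‖x‖ * ‖y‖ ≤ 1 * c := mul_le_mul hx hy (norm_nonneg _) zero_le_one
  _ = c := one_mul c

lemma nmul' {x y : ℚ_[p]} {c : ℝ} (hx : ‖x‖ ≤ c) (hy : ‖y‖ ≤ 1) : ‖x * y‖ ≤ c := by
  rw [mul_comm]; exact nmul hy hx

lemma nnat (k : ℕ) : ‖((k:ℕ) : ℚ_[p])‖ ≤ 1 := by exact_mod_cast Padic.norm_int_le_one (k:ℤ)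

lemma npmul {t : ℚ_[p]} {c : ℝ} (ht : ‖t‖ ≤ c) : ‖(p:ℚ_[p]) * t‖ ≤ c := nmul npnorm ht

lemma ndiv {t : ℚ_[p]} (ht : ‖t‖ ≤ (p:ℝ)⁻¹) : ‖t * ((p:ℚ_[p]))⁻¹‖ ≤ 1 := by
  rw [norm_mul, norm_inv, Padic.norm_p, inv_inv]
  calc ‖t‖ * (p:ℝ) ≤ (p:ℝ)⁻¹ * p := mul_le_mul_of_nonneg_right ht (le_of_lt ppos)
  _ = 1 := by have := (ppos (p := p)).ne'; field_simp

lemma nundiv {t : ℚ_[p]} (ht : ‖t * ((p:ℚ_[p]))⁻¹‖ ≤ 1) : ‖t‖ ≤ (p:ℝ)⁻¹ := by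
  rw [norm_mul, norm_inv, Padic.norm_p, inv_inv] at ht
  have hp := ppos (p := p)
  rw [← le_div_iff₀ hp] at ht
  simpa [one_div] using ht

lemma exists_res (t : ℚ_[p]) (ht : ‖t‖ ≤ 1) : ∃ r : Fin p, ‖t - ((r : ℕ) : ℚ_[p])‖ ≤ (p:ℝ)⁻¹ := by
  set z : ℤ_[p] := ⟨t, ht⟩ with hz
  refine ⟨⟨z.appr 1, by simpa using z.appr_lt 1⟩, ?_⟩
  have h := PadicInt.appr_spec 1 z
  rw [Ideal.mem_span_singleton] at h
  obtain ⟨c, hc⟩ := h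
  have h0 : ‖z - (z.appr 1 : ℤ_[p])‖ ≤ (p:ℝ)⁻¹ := by
    rw [hc, norm_mul, pow_one, PadicInt.norm_p]
    calc (p:ℝ)⁻¹ * ‖c‖ ≤ (p:ℝ)⁻¹ * 1 :=
          mul_le_mul_of_nonneg_left c.norm_le_one (le_of_lt pinv_pos)
    _ = (p:ℝ)⁻¹ := mul_one _
  have h2 : ((z - (z.appr 1 : ℤ_[p]) : ℤ_[p]) : ℚ_[p]) = t - ((z.appr 1 : ℕ) : ℚ_[p]) := by
    rw [PadicInt.coe_sub, PadicInt.coe_natCast]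
  rw [PadicInt.norm_def, h2] at h0
  exact h0

lemma fin_eq {a b : Fin p} (h : ‖((a:ℕ):ℚ_[p]) - ((b:ℕ):ℚ_[p])‖ ≤ (p:ℝ)⁻¹) : a = b := by
  have h1 : ‖((((a:ℕ):ℤ) - ((b:ℕ):ℤ) : ℤ) : ℚ_[p])‖ < 1 := by
    push_cast
    exact lt_of_le_of_lt h pinv_lt_one
  rw [Padic.norm_intCast_lt_one_iff] at h1
  have h2 : (((a:ℕ):ℤ) - ((b:ℕ):ℤ)) = 0 := by
    rcases h1 with ⟨k, hk⟩
    have ha := a.isLt; have hb := b.isLt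
    have h3 : |((a:ℕ):ℤ) - ((b:ℕ):ℤ)| < p := by
      rw [abs_sub_lt_iff]; omega
    rw [hk] at h3
    rw [abs_mul, abs_of_nonneg (by positivity : (0:ℤ) ≤ (p:ℤ))] at h3
    have hk0 : k = 0 := by
      by_contra hcon
      have h4 : 1 ≤ |k| := Int.one_le_abs (by omega)
      have hp2 : (2:ℤ) ≤ (p:ℤ) := by exact_mod_cast (hpp : p.Prime).two_le
      nlinarith
    simp [hk, hk0]
  ext
  omega

lemma norm_le_pinv_of_lt_one {t : ℚ_[p]} (ht1 : ‖t‖ ≤ 1) (ht : ‖t‖ < 1) : ‖t‖ ≤ (p:ℝ)⁻¹ := by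
  set z : ℤ_[p] := ⟨t, ht1⟩ with hz
  have h := (PadicInt.norm_lt_one_iff_dvd z).mp (by rwa [PadicInt.norm_def])
  obtain ⟨c, hc⟩ := h
  have h2 : ‖z‖ ≤ (p:ℝ)⁻¹ := by
    rw [hc, norm_mul, PadicInt.norm_p]
    exact mul_le_of_le_one_right (by positivity) c.norm_le_one
  rwa [PadicInt.norm_def] at h2

section N
variable (n : ℕ)

lemma Npos : (0:ℝ) < (p:ℝ)^(-(n:ℤ)) := zpow_pos ppos _
lemma NleOne : (p:ℝ)^(-(n:ℤ)) ≤ 1 := by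
  apply zpow_le_one_of_nonpos₀ (le_of_lt hpR); omega
lemma Nle_pinv (hn : 1 ≤ n) : (p:ℝ)^(-(n:ℤ)) ≤ (p:ℝ)⁻¹ := by
  rw [← zpow_neg_one]
  apply zpow_le_zpow_right₀ (le_of_lt hpR)
  omega
end N

/-! ### Matrices -/

def dmat (p : ℕ) [Fact p.Prime] : M4 p := Matrix.diagonal ![(p : ℚ_[p]), (p : ℚ_[p]), 1, 1]

def Umat (x y z : ℚ_[p]) : M4 p := !![1,0,x,y;0,1,z,x;0,0,1,0;0,0,0,1]

def matA (x y z : ℚ_[p]) : M4 p :=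
  !![(p:ℚ_[p]),0,x,y;0,(p:ℚ_[p]),z,x;0,0,1,0;0,0,0,1]

def matAinv (x y z : ℚ_[p]) : M4 p :=
  !![((p:ℚ_[p]))⁻¹, 0, -(x*((p:ℚ_[p]))⁻¹), -(y*((p:ℚ_[p]))⁻¹);
     0, ((p:ℚ_[p]))⁻¹, -(z*((p:ℚ_[p]))⁻¹), -(x*((p:ℚ_[p]))⁻¹);
     0,0,1,0; 0,0,0,1]

def matB (x y : ℚ_[p]) : M4 p :=
  !![(p:ℚ_[p]), x, 0, y; 0,1,0,0; 0,0,(p:ℚ_[p]),-x; 0,0,0,1]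

def matBinv (x y : ℚ_[p]) : M4 p :=
  !![((p:ℚ_[p]))⁻¹, -(x*((p:ℚ_[p]))⁻¹), 0, -(y*((p:ℚ_[p]))⁻¹);
     0,1,0,0; 0,0,((p:ℚ_[p]))⁻¹, x*((p:ℚ_[p]))⁻¹; 0,0,0,1]

def XSmat (x y : ℚ_[p]) : M4 p := !![1,0,x,y;0,0,1,0;0,-1,0,-x;0,0,0,1]

def sinv : M4 p := !![1,0,0,0;0,0,-1,0;0,1,0,0;0,0,0,1]

lemma rep3_inl (i : Fin p × Fin p × Fin p) :
    rep3 p (Sum.inl i) = matA ((i.1:ℕ):ℚ_[p]) ((i.2.1:ℕ):ℚ_[p]) ((i.2.2:ℕ):ℚ_[p]) := rfl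

lemma rep3_inr (i : Fin p × Fin p) :
    rep3 p (Sum.inr i) = matB ((i.1:ℕ):ℚ_[p]) ((i.2:ℕ):ℚ_[p]) := rfl

/-! ### Matrix computations -/

lemma matA_eq (x y z : ℚ_[p]) : matA x y z = Umat x y z * dmat p := by
  unfold matA Umat dmat
  ext i j
  fin_cases i <;> fin_cases j <;>
    simp [Matrix.mul_apply, Fin.sum_univ_four, Matrix.vecHead, Matrix.vecTail, Matrix.diagonal]

lemma matB_eq (x y : ℚ_[p]) : matB x y = XSmat x y * dmat p * sinv := by
  unfold matB XSmat dmat sinv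
  ext i j
  fin_cases i <;> fin_cases j <;>
    simp [Matrix.mul_apply, Fin.sum_univ_four, Matrix.vecHead, Matrix.vecTail, Matrix.diagonal,
      show (Fin.succ 2 : Fin 4) = 3 from rfl, show (Fin.succ 0 : Fin 4) = 1 from rfl,
      show (Fin.succ 1 : Fin 4) = 2 from rfl]

lemma AAinv (x y z : ℚ_[p]) : matA x y z * matAinv x y z = 1 := by
  have hp0 : ((p:ℚ_[p])) ≠ 0 := pQne
  unfold matA matAinv
  ext i j
  fin_cases i <;> fin_cases j <;>
    simp [Matrix.mul_apply, Fin.sum_univ_four, Matrix.vecHead, Matrix.vecTail, Matrix.one_apply] <;>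
    field_simp <;> ring

lemma AinvA (x y z : ℚ_[p]) : matAinv x y z * matA x y z = 1 := by
  have hp0 : ((p:ℚ_[p])) ≠ 0 := pQne
  unfold matA matAinv
  ext i j
  fin_cases i <;> fin_cases j <;>
    simp [Matrix.mul_apply, Fin.sum_univ_four, Matrix.vecHead, Matrix.vecTail, Matrix.one_apply] <;>
    field_simp <;> ring

lemma BBinv (x y : ℚ_[p]) : matB x y * matBinv x y = 1 := by
  have hp0 : ((p:ℚ_[p])) ≠ 0 := pQne
  unfold matB matBinv
  ext i j
  fin_cases i <;> fin_cases j <;>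
    simp [Matrix.mul_apply, Fin.sum_univ_four, Matrix.vecHead, Matrix.vecTail, Matrix.one_apply] <;>
    field_simp <;> ring

lemma BinvB (x y : ℚ_[p]) : matBinv x y * matB x y = 1 := by
  have hp0 : ((p:ℚ_[p])) ≠ 0 := pQne
  unfold matB matBinv
  ext i j
  fin_cases i <;> fin_cases j <;>
    simp [Matrix.mul_apply, Fin.sum_univ_four, Matrix.vecHead, Matrix.vecTail, Matrix.one_apply] <;>
    field_simp <;> ring

/-! ### Similitude predicate -/

def GSpM (g : M4 p) (c : ℚ_[p]) : Prop := g.transpose * Jmat p * g = c • Jmat p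

lemma GSpM.mul {g h : M4 p} {c e : ℚ_[p]} (hg : GSpM g c) (hh : GSpM h e) :
    GSpM (g * h) (c * e) := by
  unfold GSpM at *
  rw [Matrix.transpose_mul]
  have h1 : h.transpose * g.transpose * Jmat p * (g * h)
      = h.transpose * (g.transpose * Jmat p * g) * h := by
    simp only [Matrix.mul_assoc]
  rw [h1, hg, Matrix.mul_smul, Matrix.smul_mul, hh, smul_smul]

lemma dmat_gsp : GSpM (dmat p) ((p:ℚ_[p])) := by
  unfold GSpM dmat Jmat
  ext i j
  fin_cases i <;> fin_cases j <;>
    simp [Matrix.mul_apply, Fin.sum_univ_four, Matrix.diagonal, Matrix.transpose,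
      Matrix.vecHead, Matrix.vecTail]

lemma Umat_gsp (x y z : ℚ_[p]) : GSpM (Umat x y z) 1 := by
  unfold GSpM Umat Jmat
  ext i j
  fin_cases i <;> fin_cases j <;>
    simp [Matrix.mul_apply, Fin.sum_univ_four, Matrix.transpose, Matrix.vecHead, Matrix.vecTail]

lemma XSmat_gsp (x y : ℚ_[p]) : GSpM (XSmat x y) 1 := by
  unfold GSpM XSmat Jmat
  ext i j
  fin_cases i <;> fin_cases j <;>
    simp [Matrix.mul_apply, Fin.sum_univ_four, Matrix.transpose, Matrix.vecHead, Matrix.vecTail]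

lemma sinv_gsp : GSpM (sinv : M4 p) 1 := by
  unfold GSpM sinv Jmat
  ext i j
  fin_cases i <;> fin_cases j <;>
    simp [Matrix.mul_apply, Fin.sum_univ_four, Matrix.transpose, Matrix.vecHead, Matrix.vecTail]

lemma matAinv_gsp (x y z : ℚ_[p]) : GSpM (matAinv x y z) (((p:ℚ_[p]))⁻¹) := by
  have hp0 : ((p:ℚ_[p])) ≠ 0 := pQne
  unfold GSpM matAinv Jmat
  ext i j
  fin_cases i <;> fin_cases j <;>
    simp [Matrix.mul_apply, Fin.sum_univ_four, Matrix.transpose, Matrix.vecHead, Matrix.vecTail] <;>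
    field_simp <;> ring

lemma matBinv_gsp (x y : ℚ_[p]) : GSpM (matBinv x y) (((p:ℚ_[p]))⁻¹) := by
  have hp0 : ((p:ℚ_[p])) ≠ 0 := pQne
  unfold GSpM matBinv Jmat
  ext i j
  fin_cases i <;> fin_cases j <;>
    simp [Matrix.mul_apply, Fin.sum_univ_four, Matrix.transpose, Matrix.vecHead, Matrix.vecTail] <;>
    field_simp <;> ring

/-! ### Determinants -/

lemma det_dmat : (dmat p).det = (p:ℚ_[p]) * (p:ℚ_[p]) := by
  unfold dmat
  rw [Matrix.det_diagonal]
  simp [Fin.prod_univ_four]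

lemma det_matAinv (x y z : ℚ_[p]) : (matAinv x y z).det = (((p:ℚ_[p])) * ((p:ℚ_[p])))⁻¹ := by
  unfold matAinv
  simp [Matrix.det_succ_row_zero, Fin.sum_univ_succ]
  try rw [mul_inv]

lemma det_matBinv (x y : ℚ_[p]) : (matBinv x y).det = (((p:ℚ_[p])) * ((p:ℚ_[p])))⁻¹ := by
  unfold matBinv
  simp [Matrix.det_succ_row_zero, Fin.sum_univ_succ]
  try rw [mul_inv]

lemma det_expand (a : M4 p) : a.det =
    a 0 0 * a 3 3 * (a 1 1 * a 2 2 - a 1 2 * a 2 1)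
    + (a 1 0 * (- a 0 1*a 2 2*a 3 3 + a 0 1*a 2 3*a 3 2 + a 0 2*a 2 1*a 3 3 - a 0 2*a 2 3*a 3 1 - a 0 3*a 2 1*a 3 2 + a 0 3*a 2 2*a 3 1)
    + a 2 0 * (a 0 1*a 1 2*a 3 3 - a 0 1*a 1 3*a 3 2 - a 0 2*a 1 1*a 3 3 + a 0 2*a 1 3*a 3 1 + a 0 3*a 1 1*a 3 2 - a 0 3*a 1 2*a 3 1)
    + a 3 0 * (- a 0 1*a 1 2*a 2 3 + a 0 1*a 1 3*a 2 2 + a 0 2*a 1 1*a 2 3 - a 0 2*a 1 3*a 2 1 - a 0 3*a 1 1*a 2 2 + a 0 3*a 1 2*a 2 1)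
    + a 3 1 * (a 0 0*a 1 2*a 2 3 - a 0 0*a 1 3*a 2 2)
    + a 3 2 * (- a 0 0*a 1 1*a 2 3 + a 0 0*a 1 3*a 2 1)) := by
  rw [show a = !![a 0 0, a 0 1, a 0 2, a 0 3; a 1 0, a 1 1, a 1 2, a 1 3;
      a 2 0, a 2 1, a 2 2, a 2 3; a 3 0, a 3 1, a 3 2, a 3 3] from by
    ext i j; fin_cases i <;> fin_cases j <;> rfl]
  simp [Matrix.det_succ_row_zero, Fin.sum_univ_succ,
    show (Fin.succAbove 2 2 : Fin 4) = 3 from rfl, show (Fin.succAbove 1 2 : Fin 4) = 3 from rfl,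
    show (Fin.castSucc 2 : Fin 4) = 2 from rfl]
  rw [show (Fin.succAbove 3 2 : Fin 4) = 2 from rfl]
  simp
  ring

/-! ### Subgroup facts -/

variable {m n : ℕ}

lemma Kone : (1 : M4 p) ∈ Kmn1 p m n := by
  refine ⟨?_, ?_, ⟨1, ?_, ?_, ?_⟩, ?_, ?_, ?_, ?_, ?_⟩
  · intro i j
    rcases eq_or_ne i j with h | h
    · rw [h, Matrix.one_apply_eq]; norm_num
    · rw [Matrix.one_apply_ne h]; norm_num
  · simp
  · simp
  · try simp
    try exact le_of_lt (Npos m)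
  · try simp [Matrix.transpose_one]
  all_goals
    try simp [Matrix.one_apply]
  all_goals
    exact le_of_lt (Npos n)

lemma Kmul {a b : M4 p} (ha : a ∈ Kmn1 p m n) (hb : b ∈ Kmn1 p m n) :
    a * b ∈ Kmn1 p m n := by
  obtain ⟨ha1, ha2, ⟨μa, hμa1, hμa2, hμa3⟩, ha10, ha20, ha30, ha31, ha32⟩ := ha
  obtain ⟨hb1, hb2, ⟨μb, hμb1, hμb2, hμb3⟩, hb10, hb20, hb30, hb31, hb32⟩ := hb
  refine ⟨?_, ?_, ⟨μa * μb, ?_, ?_, ?_⟩, ?_, ?_, ?_, ?_, ?_⟩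
  · intro i j
    rw [Matrix.mul_apply, Fin.sum_univ_four]
    exact nadd (nadd (nadd (nmul (ha1 _ _) (hb1 _ _)) (nmul (ha1 _ _) (hb1 _ _)))
      (nmul (ha1 _ _) (hb1 _ _))) (nmul (ha1 _ _) (hb1 _ _))
  · rw [Matrix.det_mul, norm_mul, ha2, hb2]; norm_num
  · rw [norm_mul, hμa1, hμb1]; norm_num
  · have h : μa * μb - 1 = μa * (μb - 1) + (μa - 1) := by ring
    rw [h]
    exact nadd (nmul (le_of_eq hμa1) hμb2) hμa2
  · exact GSpM.mul hμa3 hμb3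
  · rw [Matrix.mul_apply, Fin.sum_univ_four]
    exact nadd (nadd (nadd (nmul' ha10 (hb1 _ _)) (nmul (ha1 _ _) hb10))
      (nmul (ha1 _ _) hb20)) (nmul (ha1 _ _) hb30)
  · rw [Matrix.mul_apply, Fin.sum_univ_four]
    exact nadd (nadd (nadd (nmul' ha20 (hb1 _ _)) (nmul (ha1 _ _) hb10))
      (nmul (ha1 _ _) hb20)) (nmul (ha1 _ _) hb30)
  · rw [Matrix.mul_apply, Fin.sum_univ_four]
    exact nadd (nadd (nadd (nmul' ha30 (hb1 _ _)) (nmul' ha31 (hb1 _ _)))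
      (nmul' ha32 (hb1 _ _))) (nmul (ha1 _ _) hb30)
  · rw [Matrix.mul_apply, Fin.sum_univ_four]
    exact nadd (nadd (nadd (nmul' ha30 (hb1 _ _)) (nmul' ha31 (hb1 _ _)))
      (nmul' ha32 (hb1 _ _))) (nmul (ha1 _ _) hb31)
  · rw [Matrix.mul_apply, Fin.sum_univ_four]
    exact nadd (nadd (nadd (nmul' ha30 (hb1 _ _)) (nmul' ha31 (hb1 _ _)))
      (nmul' ha32 (hb1 _ _))) (nmul (ha1 _ _) hb32)

lemma Umem (x y z : Fin p) :
    Umat ((x:ℕ):ℚ_[p]) ((y:ℕ):ℚ_[p]) ((z:ℕ):ℚ_[p]) ∈ Kmn1 p m n := by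
  refine ⟨?_, ?_, ⟨1, by simp, by simpa using le_of_lt (Npos m), ?_⟩, ?_, ?_, ?_, ?_, ?_⟩
  · intro i j
    fin_cases i <;> fin_cases j <;>
      (try simp [Umat, Matrix.vecHead, Matrix.vecTail]) <;> (try exact nnat _)
  · unfold Umat
    simp [Matrix.det_succ_row_zero, Fin.sum_univ_succ]
  · have h := Umat_gsp ((x:ℕ):ℚ_[p]) ((y:ℕ):ℚ_[p]) ((z:ℕ):ℚ_[p])
    unfold GSpM at h
    simpa using h
  all_goals
    try simp [Umat, Matrix.vecHead, Matrix.vecTail]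
  all_goals
    exact le_of_lt (Npos n)

lemma XSmem (x y : Fin p) :
    XSmat ((x:ℕ):ℚ_[p]) ((y:ℕ):ℚ_[p]) ∈ Kmn1 p m n := by
  refine ⟨?_, ?_, ⟨1, by simp, by simpa using le_of_lt (Npos m), ?_⟩, ?_, ?_, ?_, ?_, ?_⟩
  · intro i j
    fin_cases i <;> fin_cases j <;>
      (try simp [XSmat, Matrix.vecHead, Matrix.vecTail]) <;> (try exact nnat _)
  · unfold XSmat
    simp [Matrix.det_succ_row_zero, Fin.sum_univ_succ]
  · have h := XSmat_gsp ((x:ℕ):ℚ_[p]) ((y:ℕ):ℚ_[p])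
    unfold GSpM at h
    simpa using h
  all_goals
    try simp [XSmat, Matrix.vecHead, Matrix.vecTail]
  all_goals
    exact le_of_lt (Npos n)

lemma sinvmem : (sinv : M4 p) ∈ Kmn1 p m n := by
  refine ⟨?_, ?_, ⟨1, by simp, by simpa using le_of_lt (Npos m), ?_⟩, ?_, ?_, ?_, ?_, ?_⟩
  · intro i j
    fin_cases i <;> fin_cases j <;>
      (try simp [sinv, Matrix.vecHead, Matrix.vecTail]) <;> (try norm_num)
  · unfold sinv
    simp [Matrix.det_succ_row_zero, Fin.sum_univ_succ]
  · have h := sinv_gsp (p := p)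
    unfold GSpM at h
    simpa using h
  all_goals
    try simp [sinv, Matrix.vecHead, Matrix.vecTail]
  all_goals
    exact le_of_lt (Npos n)

/-! ### Unit entries from the determinant -/

lemma norm_a33 {a : M4 p} (hn : 1 ≤ n)
    (ha1 : ∀ i j, ‖a i j‖ ≤ 1) (ha2 : ‖a.det‖ = 1)
    (ha10 : ‖a 1 0‖ ≤ (p:ℝ)^(-(n:ℤ))) (ha20 : ‖a 2 0‖ ≤ (p:ℝ)^(-(n:ℤ)))
    (ha30 : ‖a 3 0‖ ≤ (p:ℝ)^(-(n:ℤ))) (ha31 : ‖a 3 1‖ ≤ (p:ℝ)^(-(n:ℤ)))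
    (ha32 : ‖a 3 2‖ ≤ (p:ℝ)^(-(n:ℤ))) : ‖a 3 3‖ = 1 := by
  have hNp := Nle_pinv (p := p) n hn
  have s10 := le_trans ha10 hNp
  have s20 := le_trans ha20 hNp
  have s30 := le_trans ha30 hNp
  have s31 := le_trans ha31 hNp
  have s32 := le_trans ha32 hNp
  set T := a 0 0 * a 3 3 * (a 1 1 * a 2 2 - a 1 2 * a 2 1) with hT
  set E := (a 1 0 * (- a 0 1*a 2 2*a 3 3 + a 0 1*a 2 3*a 3 2 + a 0 2*a 2 1*a 3 3 - a 0 2*a 2 3*a 3 1 - a 0 3*a 2 1*a 3 2 + a 0 3*a 2 2*a 3 1)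
    + a 2 0 * (a 0 1*a 1 2*a 3 3 - a 0 1*a 1 3*a 3 2 - a 0 2*a 1 1*a 3 3 + a 0 2*a 1 3*a 3 1 + a 0 3*a 1 1*a 3 2 - a 0 3*a 1 2*a 3 1)
    + a 3 0 * (- a 0 1*a 1 2*a 2 3 + a 0 1*a 1 3*a 2 2 + a 0 2*a 1 1*a 2 3 - a 0 2*a 1 3*a 2 1 - a 0 3*a 1 1*a 2 2 + a 0 3*a 1 2*a 2 1)
    + a 3 1 * (a 0 0*a 1 2*a 2 3 - a 0 0*a 1 3*a 2 2)
    + a 3 2 * (- a 0 0*a 1 1*a 2 3 + a 0 0*a 1 3*a 2 1)) with hE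
  have hdet : a.det = T + E := det_expand a
  have c1 : ∀ i1 j1 i2 j2 i3 j3 : Fin 4, ‖a i1 j1 * a i2 j2 * a i3 j3‖ ≤ 1 :=
    fun _ _ _ _ _ _ => nmul (nmul (ha1 _ _) (ha1 _ _)) (ha1 _ _)
  have hEnorm : ‖E‖ ≤ (p:ℝ)⁻¹ := by
    rw [hE]
    have hc1 : ‖- a 0 1*a 2 2*a 3 3 + a 0 1*a 2 3*a 3 2 + a 0 2*a 2 1*a 3 3 - a 0 2*a 2 3*a 3 1
        - a 0 3*a 2 1*a 3 2 + a 0 3*a 2 2*a 3 1‖ ≤ 1 := by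
      refine nadd (nsub (nsub (nadd (nadd ?_ (c1 _ _ _ _ _ _)) (c1 _ _ _ _ _ _))
        (c1 _ _ _ _ _ _)) (c1 _ _ _ _ _ _)) (c1 _ _ _ _ _ _)
      have : -a 0 1 * a 2 2 * a 3 3 = -(a 0 1 * a 2 2 * a 3 3) := by ring
      rw [this]; exact nneg (c1 _ _ _ _ _ _)
    have hc2 : ‖a 0 1*a 1 2*a 3 3 - a 0 1*a 1 3*a 3 2 - a 0 2*a 1 1*a 3 3 + a 0 2*a 1 3*a 3 1
        + a 0 3*a 1 1*a 3 2 - a 0 3*a 1 2*a 3 1‖ ≤ 1 :=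
      nsub (nadd (nadd (nsub (nsub (c1 _ _ _ _ _ _) (c1 _ _ _ _ _ _)) (c1 _ _ _ _ _ _))
        (c1 _ _ _ _ _ _)) (c1 _ _ _ _ _ _)) (c1 _ _ _ _ _ _)
    have hc3 : ‖- a 0 1*a 1 2*a 2 3 + a 0 1*a 1 3*a 2 2 + a 0 2*a 1 1*a 2 3 - a 0 2*a 1 3*a 2 1
        - a 0 3*a 1 1*a 2 2 + a 0 3*a 1 2*a 2 1‖ ≤ 1 := by
      refine nadd (nsub (nsub (nadd (nadd ?_ (c1 _ _ _ _ _ _)) (c1 _ _ _ _ _ _))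
        (c1 _ _ _ _ _ _)) (c1 _ _ _ _ _ _)) (c1 _ _ _ _ _ _)
      have : -a 0 1 * a 1 2 * a 2 3 = -(a 0 1 * a 1 2 * a 2 3) := by ring
      rw [this]; exact nneg (c1 _ _ _ _ _ _)
    have hc4 : ‖a 0 0*a 1 2*a 2 3 - a 0 0*a 1 3*a 2 2‖ ≤ 1 :=
      nsub (c1 _ _ _ _ _ _) (c1 _ _ _ _ _ _)
    have hc5 : ‖- a 0 0*a 1 1*a 2 3 + a 0 0*a 1 3*a 2 1‖ ≤ 1 := by
      refine nadd ?_ (c1 _ _ _ _ _ _)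
      have : -a 0 0 * a 1 1 * a 2 3 = -(a 0 0 * a 1 1 * a 2 3) := by ring
      rw [this]; exact nneg (c1 _ _ _ _ _ _)
    exact nadd (nadd (nadd (nadd (nmul' s10 hc1) (nmul' s20 hc2)) (nmul' s30 hc3))
      (nmul' s31 hc4)) (nmul' s32 hc5)
  have hTnorm : ‖T‖ = 1 := by
    have hre : T = a.det + (-E) := by rw [hdet]; ring
    have hne : ‖a.det‖ ≠ ‖-E‖ := by
      rw [ha2, norm_neg]
      exact ne_of_gt (lt_of_le_of_lt hEnorm pinv_lt_one)
    rw [hre, Padic.add_eq_max_of_ne hne, ha2, norm_neg]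
    exact max_eq_left (le_trans hEnorm pinv_le_one)
  rw [hT, norm_mul, norm_mul] at hTnorm
  have h1 := ha1 0 0
  have h2 := ha1 3 3
  have h3 : ‖a 1 1 * a 2 2 - a 1 2 * a 2 1‖ ≤ 1 :=
    nsub (nmul (ha1 _ _) (ha1 _ _)) (nmul (ha1 _ _) (ha1 _ _))
  have n2 := norm_nonneg (a 3 3)
  have n3 := norm_nonneg (a 1 1 * a 2 2 - a 1 2 * a 2 1)
  have t1 : ‖a 0 0‖ * ‖a 3 3‖ ≤ ‖a 3 3‖ := mul_le_of_le_one_left n2 h1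
  have t2 : ‖a 0 0‖ * ‖a 3 3‖ * ‖a 1 1 * a 2 2 - a 1 2 * a 2 1‖ ≤ ‖a 3 3‖ := by
    calc ‖a 0 0‖ * ‖a 3 3‖ * ‖a 1 1 * a 2 2 - a 1 2 * a 2 1‖
        ≤ ‖a 3 3‖ * ‖a 1 1 * a 2 2 - a 1 2 * a 2 1‖ := mul_le_mul_of_nonneg_right t1 n3
    _ ≤ ‖a 3 3‖ * 1 := mul_le_mul_of_nonneg_left h3 n2
    _ = ‖a 3 3‖ := mul_one _
  rw [hTnorm] at t2
  linarith

lemma symp_id {a : M4 p} {μ : ℚ_[p]} (h : a.transpose * Jmat p * a = μ • Jmat p) :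
    a 0 2 * a 3 3 + a 1 2 * a 2 3 - a 2 2 * a 1 3 - a 3 2 * a 0 3 = 0 := by
  have h23 := congrFun (congrFun h 2) 3
  simp [Jmat, Matrix.mul_apply, Fin.sum_univ_four, Matrix.transpose, Matrix.smul_apply,
    Matrix.vecHead, Matrix.vecTail] at h23
  linear_combination h23

set_option maxHeartbeats 1000000 in
lemma coreA (hn : 1 ≤ n) {a : M4 p} (ha : a ∈ Kmn1 p m n) (h22 : ‖a 2 2‖ = 1) :
    ∃ i : Fin p × Fin p × Fin p, ∃ k ∈ Kmn1 p m n, a * dmat p = rep3 p (Sum.inl i) * k := by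
  obtain ⟨ha1, ha2, ⟨μ, hμ1, hμ2, hμ3⟩, ha10, ha20, ha30, ha31, ha32⟩ := ha
  have hp0 : ((p:ℚ_[p])) ≠ 0 := pQne
  have hNp : (p:ℝ)^(-(n:ℤ)) ≤ (p:ℝ)⁻¹ := Nle_pinv (p := p) n hn
  have s10 := le_trans ha10 hNp
  have s20 := le_trans ha20 hNp
  have s30 := le_trans ha30 hNp
  have s31 := le_trans ha31 hNp
  have s32 := le_trans ha32 hNp
  have h33 : ‖a 3 3‖ = 1 := norm_a33 hn ha1 ha2 ha10 ha20 ha30 ha31 ha32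
  have hEs : a 0 2 * a 3 3 + a 1 2 * a 2 3 - a 2 2 * a 1 3 - a 3 2 * a 0 3 = 0 := symp_id hμ3
  have hsm : ‖a 2 3 * a 3 2‖ ≤ (p:ℝ)⁻¹ := nmul (ha1 2 3) s32
  have hDnorm : ‖(a 2 2 * a 3 3 - a 2 3 * a 3 2)‖ = 1 := by
    have h1 : ‖a 2 2 * a 3 3‖ = 1 := by rw [norm_mul, h22, h33, one_mul]
    have hne : ‖a 2 2 * a 3 3‖ ≠ ‖-(a 2 3 * a 3 2)‖ := by
      rw [h1, norm_neg]; exact ne_of_gt (lt_of_le_of_lt hsm pinv_lt_one)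
    rw [sub_eq_add_neg, Padic.add_eq_max_of_ne hne, h1, norm_neg]
    exact max_eq_left (le_trans hsm pinv_le_one)
  have hD0 : (a 2 2 * a 3 3 - a 2 3 * a 3 2) ≠ 0 := by
    intro h; rw [h, norm_zero] at hDnorm; norm_num at hDnorm
  have hD0' : a 2 2 * a 3 3 - a 3 2 * a 2 3 ≠ 0 := by rwa [mul_comm (a 3 2)]
  have hs00n : ‖(a 0 2 * a 3 3 - a 0 3 * a 3 2) / (a 2 2 * a 3 3 - a 2 3 * a 3 2)‖ ≤ 1 := by
    rw [norm_div, hDnorm, div_one]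
    exact nsub (nmul (ha1 _ _) (ha1 _ _)) (nmul (ha1 _ _) (ha1 _ _))
  have hs01n : ‖(a 0 3 * a 2 2 - a 0 2 * a 2 3) / (a 2 2 * a 3 3 - a 2 3 * a 3 2)‖ ≤ 1 := by
    rw [norm_div, hDnorm, div_one]
    exact nsub (nmul (ha1 _ _) (ha1 _ _)) (nmul (ha1 _ _) (ha1 _ _))
  have hs10n : ‖(a 1 2 * a 3 3 - a 1 3 * a 3 2) / (a 2 2 * a 3 3 - a 2 3 * a 3 2)‖ ≤ 1 := by
    rw [norm_div, hDnorm, div_one]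
    exact nsub (nmul (ha1 _ _) (ha1 _ _)) (nmul (ha1 _ _) (ha1 _ _))
  obtain ⟨x, hx⟩ := exists_res _ hs00n
  obtain ⟨y, hy⟩ := exists_res _ hs01n
  obtain ⟨z, hz⟩ := exists_res _ hs10n
  have hXn : ‖((x:ℕ):ℚ_[p])‖ ≤ 1 := nnat _
  have hYn : ‖((y:ℕ):ℚ_[p])‖ ≤ 1 := nnat _
  have hZn : ‖((z:ℕ):ℚ_[p])‖ ≤ 1 := nnat _
  have e02 : ‖a 0 2 - ((x:ℕ):ℚ_[p]) * a 2 2 - ((y:ℕ):ℚ_[p]) * a 3 2‖ ≤ (p:ℝ)⁻¹ := by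
    have hid : a 0 2 - ((x:ℕ):ℚ_[p]) * a 2 2 - ((y:ℕ):ℚ_[p]) * a 3 2
        = ((a 0 2 * a 3 3 - a 0 3 * a 3 2) / (a 2 2 * a 3 3 - a 2 3 * a 3 2) - ((x:ℕ):ℚ_[p])) * a 2 2 + ((a 0 3 * a 2 2 - a 0 2 * a 2 3) / (a 2 2 * a 3 3 - a 2 3 * a 3 2) - ((y:ℕ):ℚ_[p])) * a 3 2 := by
      field_simp
      ring
    rw [hid]
    exact nadd (nmul' hx (ha1 2 2)) (nmul' hy (ha1 3 2))
  have e03 : ‖a 0 3 - ((x:ℕ):ℚ_[p]) * a 2 3 - ((y:ℕ):ℚ_[p]) * a 3 3‖ ≤ (p:ℝ)⁻¹ := by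
    have hid : a 0 3 - ((x:ℕ):ℚ_[p]) * a 2 3 - ((y:ℕ):ℚ_[p]) * a 3 3
        = ((a 0 2 * a 3 3 - a 0 3 * a 3 2) / (a 2 2 * a 3 3 - a 2 3 * a 3 2) - ((x:ℕ):ℚ_[p])) * a 2 3 + ((a 0 3 * a 2 2 - a 0 2 * a 2 3) / (a 2 2 * a 3 3 - a 2 3 * a 3 2) - ((y:ℕ):ℚ_[p])) * a 3 3 := by
      linear_combination (-(a 0 3)) * mul_inv_cancel₀ hD0
    rw [hid]
    exact nadd (nmul' hx (ha1 2 3)) (nmul' hy (ha1 3 3))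
  have e12 : ‖a 1 2 - ((z:ℕ):ℚ_[p]) * a 2 2 - ((x:ℕ):ℚ_[p]) * a 3 2‖ ≤ (p:ℝ)⁻¹ := by
    have hid : a 1 2 - ((z:ℕ):ℚ_[p]) * a 2 2 - ((x:ℕ):ℚ_[p]) * a 3 2
        = ((a 1 2 * a 3 3 - a 1 3 * a 3 2) / (a 2 2 * a 3 3 - a 2 3 * a 3 2) - ((z:ℕ):ℚ_[p])) * a 2 2 + ((a 0 2 * a 3 3 - a 0 3 * a 3 2) / (a 2 2 * a 3 3 - a 2 3 * a 3 2) - ((x:ℕ):ℚ_[p])) * a 3 2 := by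
      field_simp
      linear_combination (-(a 3 2)) * hEs
    rw [hid]
    exact nadd (nmul' hz (ha1 2 2)) (nmul' hx (ha1 3 2))
  have e13 : ‖a 1 3 - ((z:ℕ):ℚ_[p]) * a 2 3 - ((x:ℕ):ℚ_[p]) * a 3 3‖ ≤ (p:ℝ)⁻¹ := by
    have hid : a 1 3 - ((z:ℕ):ℚ_[p]) * a 2 3 - ((x:ℕ):ℚ_[p]) * a 3 3
        = ((a 1 2 * a 3 3 - a 1 3 * a 3 2) / (a 2 2 * a 3 3 - a 2 3 * a 3 2) - ((z:ℕ):ℚ_[p])) * a 2 3 + ((a 0 2 * a 3 3 - a 0 3 * a 3 2) / (a 2 2 * a 3 3 - a 2 3 * a 3 2) - ((x:ℕ):ℚ_[p])) * a 3 3 := by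
      linear_combination (-(a 1 3)) * mul_inv_cancel₀ hD0 + (-(a 3 3) * (a 2 2 * a 3 3 - a 2 3 * a 3 2)⁻¹) * hEs
    rw [hid]
    exact nadd (nmul' hz (ha1 2 3)) (nmul' hx (ha1 3 3))
  have hkeq : (!![a 0 0 - ((x:ℕ):ℚ_[p])*a 2 0 - ((y:ℕ):ℚ_[p])*a 3 0, a 0 1 - ((x:ℕ):ℚ_[p])*a 2 1 - ((y:ℕ):ℚ_[p])*a 3 1,
        (a 0 2 - ((x:ℕ):ℚ_[p])*a 2 2 - ((y:ℕ):ℚ_[p])*a 3 2)*((p:ℚ_[p]))⁻¹, (a 0 3 - ((x:ℕ):ℚ_[p])*a 2 3 - ((y:ℕ):ℚ_[p])*a 3 3)*((p:ℚ_[p]))⁻¹;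
      a 1 0 - ((z:ℕ):ℚ_[p])*a 2 0 - ((x:ℕ):ℚ_[p])*a 3 0, a 1 1 - ((z:ℕ):ℚ_[p])*a 2 1 - ((x:ℕ):ℚ_[p])*a 3 1,
        (a 1 2 - ((z:ℕ):ℚ_[p])*a 2 2 - ((x:ℕ):ℚ_[p])*a 3 2)*((p:ℚ_[p]))⁻¹, (a 1 3 - ((z:ℕ):ℚ_[p])*a 2 3 - ((x:ℕ):ℚ_[p])*a 3 3)*((p:ℚ_[p]))⁻¹;
      ((p:ℚ_[p]))*a 2 0, ((p:ℚ_[p]))*a 2 1, a 2 2, a 2 3;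
      ((p:ℚ_[p]))*a 3 0, ((p:ℚ_[p]))*a 3 1, a 3 2, a 3 3] : M4 p)
      = matAinv ((x:ℕ):ℚ_[p]) ((y:ℕ):ℚ_[p]) ((z:ℕ):ℚ_[p]) * (a * dmat p) := by
    unfold matAinv dmat
    ext i j
    fin_cases i <;> fin_cases j <;>
      simp [Matrix.mul_apply, Fin.sum_univ_four, Matrix.diagonal, Matrix.vecHead,
        Matrix.vecTail] <;>
      (try field_simp) <;> (try ring)
  refine ⟨(x, y, z), matAinv ((x:ℕ):ℚ_[p]) ((y:ℕ):ℚ_[p]) ((z:ℕ):ℚ_[p]) * (a * dmat p),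
    ⟨?_, ?_, ⟨μ, hμ1, hμ2, ?_⟩, ?_, ?_, ?_, ?_, ?_⟩, ?_⟩
  · rw [← hkeq]
    intro i j
    fin_cases i <;> fin_cases j
    · exact nsub (nsub (ha1 0 0) (nmul hXn (ha1 2 0))) (nmul hYn (ha1 3 0))
    · exact nsub (nsub (ha1 0 1) (nmul hXn (ha1 2 1))) (nmul hYn (ha1 3 1))
    · exact ndiv e02
    · exact ndiv e03
    · exact nsub (nsub (ha1 1 0) (nmul hZn (ha1 2 0))) (nmul hXn (ha1 3 0))
    · exact nsub (nsub (ha1 1 1) (nmul hZn (ha1 2 1))) (nmul hXn (ha1 3 1))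
    · exact ndiv e12
    · exact ndiv e13
    · exact npmul (ha1 2 0)
    · exact npmul (ha1 2 1)
    · exact ha1 2 2
    · exact ha1 2 3
    · exact npmul (ha1 3 0)
    · exact npmul (ha1 3 1)
    · exact ha1 3 2
    · exact ha1 3 3
  · rw [Matrix.det_mul, Matrix.det_mul, det_matAinv, det_dmat]
    rw [show (((p:ℚ_[p]))*((p:ℚ_[p])))⁻¹ * (a.det * (((p:ℚ_[p])) * ((p:ℚ_[p])))) = a.det from by field_simp]
    exact ha2
  · have hg := GSpM.mul (matAinv_gsp ((x:ℕ):ℚ_[p]) ((y:ℕ):ℚ_[p]) ((z:ℕ):ℚ_[p])) (GSpM.mul (show GSpM a μ from hμ3) dmat_gsp)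
    unfold GSpM at hg
    rw [hg]
    congr 1
    field_simp
  · rw [← hkeq]
    exact nsub (nsub ha10 (nmul hZn ha20)) (nmul hXn ha30)
  · rw [← hkeq]
    exact npmul ha20
  · rw [← hkeq]
    exact npmul ha30
  · rw [← hkeq]
    exact npmul ha31
  · rw [← hkeq]
    exact ha32
  · show a * dmat p = matA ((x:ℕ):ℚ_[p]) ((y:ℕ):ℚ_[p]) ((z:ℕ):ℚ_[p])
        * (matAinv ((x:ℕ):ℚ_[p]) ((y:ℕ):ℚ_[p]) ((z:ℕ):ℚ_[p]) * (a * dmat p))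
    rw [← Matrix.mul_assoc, AAinv, one_mul]

set_option maxHeartbeats 1000000 in
lemma coreB (hn : 1 ≤ n) {a : M4 p} (ha : a ∈ Kmn1 p m n) (h22 : ‖a 2 2‖ ≤ (p:ℝ)⁻¹) :
    ∃ i : Fin p × Fin p, ∃ k ∈ Kmn1 p m n, a * dmat p = rep3 p (Sum.inr i) * k := by
  obtain ⟨ha1, ha2, ⟨μ, hμ1, hμ2, hμ3⟩, ha10, ha20, ha30, ha31, ha32⟩ := ha
  have hp0 : ((p:ℚ_[p])) ≠ 0 := pQne
  have hNp : (p:ℝ)^(-(n:ℤ)) ≤ (p:ℝ)⁻¹ := Nle_pinv (p := p) n hn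
  have s10 := le_trans ha10 hNp
  have s20 := le_trans ha20 hNp
  have s30 := le_trans ha30 hNp
  have s31 := le_trans ha31 hNp
  have s32 := le_trans ha32 hNp
  have h33 : ‖a 3 3‖ = 1 := norm_a33 hn ha1 ha2 ha10 ha20 ha30 ha31 ha32
  have h330 : a 3 3 ≠ 0 := by
    intro h; rw [h, norm_zero] at h33; norm_num at h33
  have hEs : a 0 2 * a 3 3 + a 1 2 * a 2 3 - a 2 2 * a 1 3 - a 3 2 * a 0 3 = 0 := symp_id hμ3
  have hxn : ‖-(a 2 3) / (a 3 3)‖ ≤ 1 := by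
    rw [norm_div, h33, div_one, norm_neg]; exact ha1 2 3
  obtain ⟨x, hx⟩ := exists_res _ hxn
  have hXn : ‖((x:ℕ):ℚ_[p])‖ ≤ 1 := nnat _
  have hyn : ‖(a 0 3 - ((x:ℕ):ℚ_[p]) * a 1 3) / (a 3 3)‖ ≤ 1 := by
    rw [norm_div, h33, div_one]
    exact nsub (ha1 0 3) (nmul hXn (ha1 1 3))
  obtain ⟨y, hy⟩ := exists_res _ hyn
  have hYn : ‖((y:ℕ):ℚ_[p])‖ ≤ 1 := nnat _
  have c1 : ‖a 2 2 + ((x:ℕ):ℚ_[p]) * a 3 2‖ ≤ (p:ℝ)⁻¹ := nadd h22 (nmul hXn s32)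
  have c2 : ‖a 2 3 + ((x:ℕ):ℚ_[p]) * a 3 3‖ ≤ (p:ℝ)⁻¹ := by
    have hid : a 2 3 + ((x:ℕ):ℚ_[p]) * a 3 3 = (((x:ℕ):ℚ_[p]) - (-(a 2 3) / (a 3 3))) * a 3 3 := by
      field_simp
      ring
    rw [hid]
    refine nmul' ?_ (ha1 3 3)
    rw [norm_sub_rev]
    exact hx
  have c3 : ‖a 0 3 - ((x:ℕ):ℚ_[p]) * a 1 3 - ((y:ℕ):ℚ_[p]) * a 3 3‖ ≤ (p:ℝ)⁻¹ := by
    have hid : a 0 3 - ((x:ℕ):ℚ_[p]) * a 1 3 - ((y:ℕ):ℚ_[p]) * a 3 3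
        = ((a 0 3 - ((x:ℕ):ℚ_[p]) * a 1 3) / (a 3 3) - ((y:ℕ):ℚ_[p])) * a 3 3 := by
      field_simp
    rw [hid]
    exact nmul' hy (ha1 3 3)
  have c4 : ‖a 0 2 - ((x:ℕ):ℚ_[p]) * a 1 2 - ((y:ℕ):ℚ_[p]) * a 3 2‖ ≤ (p:ℝ)⁻¹ := by
    have hid : a 0 2 - ((x:ℕ):ℚ_[p]) * a 1 2 - ((y:ℕ):ℚ_[p]) * a 3 2
        = ((-(a 2 3) / (a 3 3)) - ((x:ℕ):ℚ_[p])) * a 1 2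
          + (a 1 3 * a 2 2 + a 0 3 * a 3 2) / (a 3 3) + (-((y:ℕ):ℚ_[p])) * a 3 2 := by
      field_simp
      linear_combination hEs
    rw [hid]
    refine nadd (nadd (nmul' hx (ha1 1 2)) ?_) (nmul (nneg hYn) s32)
    rw [norm_div, h33, div_one]
    exact nadd (nmul (ha1 1 3) h22) (nmul (ha1 0 3) s32)
  have hkeq : (!![a 0 0 - ((x:ℕ):ℚ_[p])*a 1 0 - ((y:ℕ):ℚ_[p])*a 3 0, a 0 1 - ((x:ℕ):ℚ_[p])*a 1 1 - ((y:ℕ):ℚ_[p])*a 3 1,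
        (a 0 2 - ((x:ℕ):ℚ_[p]) * a 1 2 - ((y:ℕ):ℚ_[p]) * a 3 2)*((p:ℚ_[p]))⁻¹, (a 0 3 - ((x:ℕ):ℚ_[p]) * a 1 3 - ((y:ℕ):ℚ_[p]) * a 3 3)*((p:ℚ_[p]))⁻¹;
      ((p:ℚ_[p]))*a 1 0, ((p:ℚ_[p]))*a 1 1, a 1 2, a 1 3;
      a 2 0 + ((x:ℕ):ℚ_[p])*a 3 0, a 2 1 + ((x:ℕ):ℚ_[p])*a 3 1, (a 2 2 + ((x:ℕ):ℚ_[p]) * a 3 2)*((p:ℚ_[p]))⁻¹, (a 2 3 + ((x:ℕ):ℚ_[p]) * a 3 3)*((p:ℚ_[p]))⁻¹;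
      ((p:ℚ_[p]))*a 3 0, ((p:ℚ_[p]))*a 3 1, a 3 2, a 3 3] : M4 p)
      = matBinv ((x:ℕ):ℚ_[p]) ((y:ℕ):ℚ_[p]) * (a * dmat p) := by
    unfold matBinv dmat
    ext i j
    fin_cases i <;> fin_cases j <;>
      simp [Matrix.mul_apply, Fin.sum_univ_four, Matrix.diagonal, Matrix.vecHead,
        Matrix.vecTail] <;>
      (try field_simp) <;> (try ring)
  refine ⟨(x, y), matBinv ((x:ℕ):ℚ_[p]) ((y:ℕ):ℚ_[p]) * (a * dmat p),
    ⟨?_, ?_, ⟨μ, hμ1, hμ2, ?_⟩, ?_, ?_, ?_, ?_, ?_⟩, ?_⟩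
  · rw [← hkeq]
    intro i j
    fin_cases i <;> fin_cases j
    · exact nsub (nsub (ha1 0 0) (nmul hXn (ha1 1 0))) (nmul hYn (ha1 3 0))
    · exact nsub (nsub (ha1 0 1) (nmul hXn (ha1 1 1))) (nmul hYn (ha1 3 1))
    · exact ndiv c4
    · exact ndiv c3
    · exact npmul (ha1 1 0)
    · exact npmul (ha1 1 1)
    · exact ha1 1 2
    · exact ha1 1 3
    · exact nadd (ha1 2 0) (nmul hXn (ha1 3 0))
    · exact nadd (ha1 2 1) (nmul hXn (ha1 3 1))
    · exact ndiv c1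
    · exact ndiv c2
    · exact npmul (ha1 3 0)
    · exact npmul (ha1 3 1)
    · exact ha1 3 2
    · exact ha1 3 3
  · rw [Matrix.det_mul, Matrix.det_mul, det_matBinv, det_dmat]
    rw [show (((p:ℚ_[p]))*((p:ℚ_[p])))⁻¹ * (a.det * (((p:ℚ_[p])) * ((p:ℚ_[p])))) = a.det from by field_simp]
    exact ha2
  · have hg := GSpM.mul (matBinv_gsp ((x:ℕ):ℚ_[p]) ((y:ℕ):ℚ_[p])) (GSpM.mul (show GSpM a μ from hμ3) dmat_gsp)
    unfold GSpM at hg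
    rw [hg]
    congr 1
    field_simp
  · rw [← hkeq]
    exact npmul ha10
  · rw [← hkeq]
    exact nadd ha20 (nmul hXn ha30)
  · rw [← hkeq]
    exact npmul ha30
  · rw [← hkeq]
    exact npmul ha31
  · rw [← hkeq]
    exact ha32
  · show a * dmat p = matB ((x:ℕ):ℚ_[p]) ((y:ℕ):ℚ_[p]) * (matBinv ((x:ℕ):ℚ_[p]) ((y:ℕ):ℚ_[p]) * (a * dmat p))
    rw [← Matrix.mul_assoc, BBinv, one_mul]

lemma pinv_not_le : ¬ (‖(((p:ℚ_[p])))⁻¹‖ ≤ 1) := by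
  rw [norm_inv, Padic.norm_p, inv_inv]
  push_neg
  exact hpR

lemma prodAA02 (x y z x' y' z' : ℚ_[p]) :
    (matAinv x y z * matA x' y' z') 0 2 = (x' - x) * (((p:ℚ_[p])))⁻¹ := by
  simp [matAinv, matA, Matrix.mul_apply, Fin.sum_univ_four, Matrix.vecHead, Matrix.vecTail]
  ring

lemma prodAA03 (x y z x' y' z' : ℚ_[p]) :
    (matAinv x y z * matA x' y' z') 0 3 = (y' - y) * (((p:ℚ_[p])))⁻¹ := by
  simp [matAinv, matA, Matrix.mul_apply, Fin.sum_univ_four, Matrix.vecHead, Matrix.vecTail]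
  ring

lemma prodAA12 (x y z x' y' z' : ℚ_[p]) :
    (matAinv x y z * matA x' y' z') 1 2 = (z' - z) * (((p:ℚ_[p])))⁻¹ := by
  simp [matAinv, matA, Matrix.mul_apply, Fin.sum_univ_four, Matrix.vecHead, Matrix.vecTail]
  ring

lemma prodAB11 (x y z x' y' : ℚ_[p]) :
    (matAinv x y z * matB x' y') 1 1 = (((p:ℚ_[p])))⁻¹ := by
  simp [matAinv, matB, Matrix.mul_apply, Fin.sum_univ_four, Matrix.vecHead, Matrix.vecTail]

lemma prodBA22 (x y x' y' z' : ℚ_[p]) :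
    (matBinv x y * matA x' y' z') 2 2 = (((p:ℚ_[p])))⁻¹ := by
  simp [matBinv, matA, Matrix.mul_apply, Fin.sum_univ_four, Matrix.vecHead, Matrix.vecTail]

lemma prodBB01 (x y x' y' : ℚ_[p]) :
    (matBinv x y * matB x' y') 0 1 = (x' - x) * (((p:ℚ_[p])))⁻¹ := by
  simp [matBinv, matB, Matrix.mul_apply, Fin.sum_univ_four, Matrix.vecHead, Matrix.vecTail]
  ring

lemma prodBB03 (x y x' y' : ℚ_[p]) :
    (matBinv x y * matB x' y') 0 3 = (y' - y) * (((p:ℚ_[p])))⁻¹ := by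
  simp [matBinv, matB, Matrix.mul_apply, Fin.sum_univ_four, Matrix.vecHead, Matrix.vecTail]
  ring

lemma fin_eq' {a b : Fin p} (h : ‖(((a:ℕ):ℚ_[p]) - ((b:ℕ):ℚ_[p])) * (((p:ℚ_[p])))⁻¹‖ ≤ 1) : a = b :=
  fin_eq (nundiv h)

end S3

open S3

/-- Double coset decomposition of `K^{(1)}_{m,n} · diag(ℓ,ℓ,1,1) · K^{(1)}_{m,n}` into
`ℓ³ + ℓ²` pairwise distinct left cosets. -/
theorem stmt3 (p : ℕ) [Fact p.Prime] (m n : ℕ) (hn : 1 ≤ n) :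
    (Kmn1 p m n * {Matrix.diagonal ![(p : ℚ_[p]), (p : ℚ_[p]), 1, 1]} * Kmn1 p m n =
      ⋃ i : (Fin p × Fin p × Fin p) ⊕ (Fin p × Fin p),
        ({rep3 p i} : Set (Matrix (Fin 4) (Fin 4) ℚ_[p])) * Kmn1 p m n) ∧
    Function.Injective
      (fun i : (Fin p × Fin p × Fin p) ⊕ (Fin p × Fin p) =>
        ({rep3 p i} : Set (Matrix (Fin 4) (Fin 4) ℚ_[p])) * Kmn1 p m n) := by
  have hd : ({Matrix.diagonal ![(p : ℚ_[p]), (p : ℚ_[p]), 1, 1]} : Set (M4 p)) = {dmat p} := rfl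
  constructor
  · rw [hd]
    apply Set.eq_of_subset_of_subset
    · intro g hg
      rw [Set.mem_mul] at hg
      obtain ⟨u, hu, b, hb, hub⟩ := hg
      rw [Set.mem_mul] at hu
      obtain ⟨a, haK, d', hd', hadu⟩ := hu
      rw [Set.mem_singleton_iff] at hd'
      subst hd'
      rcases eq_or_lt_of_le ((haK.1 : ∀ i j, ‖a i j‖ ≤ 1) 2 2) with h22 | h22
      · obtain ⟨i, k, hkK, heq⟩ := coreA hn haK h22
        apply Set.mem_iUnion.mpr
        refine ⟨Sum.inl i, ?_⟩
        rw [Set.mem_mul]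
        refine ⟨rep3 p (Sum.inl i), Set.mem_singleton _, k * b, Kmul hkK hb, ?_⟩
        rw [← Matrix.mul_assoc, ← heq, hadu, hub]
      · obtain ⟨i, k, hkK, heq⟩ := coreB hn haK
          (norm_le_pinv_of_lt_one (haK.1 2 2) h22)
        apply Set.mem_iUnion.mpr
        refine ⟨Sum.inr i, ?_⟩
        rw [Set.mem_mul]
        refine ⟨rep3 p (Sum.inr i), Set.mem_singleton _, k * b, Kmul hkK hb, ?_⟩
        rw [← Matrix.mul_assoc, ← heq, hadu, hub]
    · intro g hg
      obtain ⟨S, ⟨i, hS⟩, hgS⟩ := hg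
      rw [← hS] at hgS
      rw [Set.mem_mul] at hgS
      obtain ⟨r, hr, b, hb, hrb⟩ := hgS
      rw [Set.mem_singleton_iff] at hr
      subst hr
      rcases i with i | i
      · rw [← hrb, rep3_inl, matA_eq]
        exact Set.mul_mem_mul (Set.mul_mem_mul (Umem _ _ _) (Set.mem_singleton _)) hb
      · rw [← hrb, rep3_inr, matB_eq, Matrix.mul_assoc]
        exact Set.mul_mem_mul (Set.mul_mem_mul (XSmem _ _) (Set.mem_singleton _))
          (Kmul sinvmem hb)
  · intro i j hij
    simp only at hij
    have hmem : rep3 p i ∈ ({rep3 p j} : Set (M4 p)) * Kmn1 p m n := by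
      rw [← hij]
      rw [Set.mem_mul]
      exact ⟨rep3 p i, Set.mem_singleton _, 1, Kone, mul_one _⟩
    rw [Set.mem_mul] at hmem
    obtain ⟨r, hr, k, hkK, hrk⟩ := hmem
    rw [Set.mem_singleton_iff] at hr
    subst hr
    have hk1 := hkK.1
    rcases i with ⟨xi, yi, zi⟩ | ⟨xi, yi⟩ <;> rcases j with ⟨xj, yj, zj⟩ | ⟨xj, yj⟩
    · have hkval : k = matAinv ((xj:ℕ):ℚ_[p]) ((yj:ℕ):ℚ_[p]) ((zj:ℕ):ℚ_[p])
          * matA ((xi:ℕ):ℚ_[p]) ((yi:ℕ):ℚ_[p]) ((zi:ℕ):ℚ_[p]) := by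
        have hrk' : matA ((xj:ℕ):ℚ_[p]) ((yj:ℕ):ℚ_[p]) ((zj:ℕ):ℚ_[p]) * k
            = matA ((xi:ℕ):ℚ_[p]) ((yi:ℕ):ℚ_[p]) ((zi:ℕ):ℚ_[p]) := hrk
        rw [← hrk', ← Matrix.mul_assoc, AinvA, one_mul]
      have h1 := hk1 0 2
      have h2 := hk1 0 3
      have h3 := hk1 1 2
      rw [hkval, prodAA02] at h1
      rw [hkval, prodAA03] at h2
      rw [hkval, prodAA12] at h3
      rw [fin_eq' h1, fin_eq' h2, fin_eq' h3]
    · have hkval : k = matBinv ((xj:ℕ):ℚ_[p]) ((yj:ℕ):ℚ_[p])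
          * matA ((xi:ℕ):ℚ_[p]) ((yi:ℕ):ℚ_[p]) ((zi:ℕ):ℚ_[p]) := by
        have hrk' : matB ((xj:ℕ):ℚ_[p]) ((yj:ℕ):ℚ_[p]) * k
            = matA ((xi:ℕ):ℚ_[p]) ((yi:ℕ):ℚ_[p]) ((zi:ℕ):ℚ_[p]) := hrk
        rw [← hrk', ← Matrix.mul_assoc, BinvB, one_mul]
      have h1 := hk1 2 2
      rw [hkval, prodBA22] at h1
      exact absurd h1 pinv_not_le
    · have hkval : k = matAinv ((xj:ℕ):ℚ_[p]) ((yj:ℕ):ℚ_[p]) ((zj:ℕ):ℚ_[p])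
          * matB ((xi:ℕ):ℚ_[p]) ((yi:ℕ):ℚ_[p]) := by
        have hrk' : matA ((xj:ℕ):ℚ_[p]) ((yj:ℕ):ℚ_[p]) ((zj:ℕ):ℚ_[p]) * k
            = matB ((xi:ℕ):ℚ_[p]) ((yi:ℕ):ℚ_[p]) := hrk
        rw [← hrk', ← Matrix.mul_assoc, AinvA, one_mul]
      have h1 := hk1 1 1
      rw [hkval, prodAB11] at h1
      exact absurd h1 pinv_not_le
    · have hkval : k = matBinv ((xj:ℕ):ℚ_[p]) ((yj:ℕ):ℚ_[p])
          * matB ((xi:ℕ):ℚ_[p]) ((yi:ℕ):ℚ_[p]) := by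
        have hrk' : matB ((xj:ℕ):ℚ_[p]) ((yj:ℕ):ℚ_[p]) * k
            = matB ((xi:ℕ):ℚ_[p]) ((yi:ℕ):ℚ_[p]) := hrk
        rw [← hrk', ← Matrix.mul_assoc, BinvB, one_mul]
      have h1 := hk1 0 1
      have h2 := hk1 0 3
      rw [hkval, prodBB01] at h1
      rw [hkval, prodBB03] at h2
      rw [fin_eq' h1, fin_eq' h2]
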